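/- For k = 3, the system of equations h_s(Δ) = 0 for all maximizing samples s ∈ S_3(2,2) ∪ S_3(3,3,0), together with the constraints that all row and column sums of each of the three 3×3 matrices δ^{(1)}, δ^{(2)}, δ^{(3)} vanish, has Δ = 0 as its only solution. Here each h_s(Δ) is the signed linear form Σ_{ℓ ∈ Ind_s} g_s^{(ℓ)}(Δ) − Σ_{ℓ ∉ Ind_s} g_s^{(ℓ)}(Δ) where g_s^{(ℓ)}(Δ) = Σ_{(i,j)∈s} δ^{(ℓ)}_{i,j}. -/
import Mathlib


open Finset Filter

/-- Membership in the affine set 𝔖ₖ. -/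
def inSk (k : ℕ) (C : Fin k → Matrix (Fin k) (Fin k) ℝ) : Prop :=
  ∀ ℓ : Fin k,
    (∀ i : Fin k, i ≠ ℓ → ∑ j, C ℓ i j = 0) ∧
    (∀ j : Fin k, j ≠ ℓ → ∑ i, C ℓ i j = 0) ∧
    (∑ i, ∑ j, C ℓ i j = 1)

/-- A k-sample: nonempty subset of [k]×[k] with pairwise distinct second coordinates. -/
def IsSample {k : ℕ} (s : Finset (Fin k × Fin k)) : Prop :=
  s.Nonempty ∧ ∀ p ∈ s, ∀ q ∈ s, p ≠ q → p.2 ≠ q.2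

/-- g_s^{(ℓ)}(C) -/
def gPart {k : ℕ} (s : Finset (Fin k × Fin k)) (C : Fin k → Matrix (Fin k) (Fin k) ℝ)
    (ℓ : Fin k) : ℝ :=
  ∑ p ∈ s, C ℓ p.1 p.2

/-- g_s(C) -/
def gSample {k : ℕ} (s : Finset (Fin k × Fin k)) (C : Fin k → Matrix (Fin k) (Fin k) ℝ) : ℝ :=
  ∑ ℓ : Fin k, |gPart s C ℓ|

/-- g_{S_k}(C) : the maximum of g_s(C) over all k-samples s. -/
noncomputable def gMax (k : ℕ) (C : Fin k → Matrix (Fin k) (Fin k) ℝ) : ℝ :=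
  ⨆ s : {s : Finset (Fin k × Fin k) // IsSample s}, gSample s.1 C

/-- multiplicity of ℓ in the multiset of coordinates of elements of s -/
def mult {k : ℕ} (s : Finset (Fin k × Fin k)) (ℓ : Fin k) : ℕ :=
  (s.filter (fun p => p.1 = ℓ)).card + (s.filter (fun p => p.2 = ℓ)).card

/-- β(s): number of distinct indices among coordinates of s -/
def beta {k : ℕ} (s : Finset (Fin k × Fin k)) : ℕ :=
  (s.image Prod.fst ∪ s.image Prod.snd).card

/-- γ(s): number of diagonal elements of s -/
def gamma {k : ℕ} (s : Finset (Fin k × Fin k)) : ℕ :=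
  (s.filter (fun p => p.1 = p.2)).card

/-- the strong homogeneous flow C*_k -/
noncomputable def Cstar (k : ℕ) : Fin k → Matrix (Fin k) (Fin k) ℝ :=
  fun ℓ i j =>
    if i = ℓ ∧ j = ℓ then 2/(k:ℝ) - 1/(k:ℝ)^2
    else if i = ℓ ∨ j = ℓ then 1/(k:ℝ) - 1/(k:ℝ)^2
    else -1/(k:ℝ)^2

/-- the Sym(k)-invariant tuple with parameters x (i=j=ℓ), y (i=j≠ℓ),
a (exactly one of i,j equals ℓ), b (otherwise) -/
def Cfix (k : ℕ) (x y a b : ℝ) : Fin k → Matrix (Fin k) (Fin k) ℝ :=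
  fun ℓ i j =>
    if i = ℓ ∧ j = ℓ then x
    else if i = j then y
    else if i = ℓ ∨ j = ℓ then a
    else b

/-- The Sym(k)-action on tuples of matrices. -/
def permAct {k : ℕ} (σ : Equiv.Perm (Fin k)) (C : Fin k → Matrix (Fin k) (Fin k) ℝ) :
    Fin k → Matrix (Fin k) (Fin k) ℝ :=
  fun ℓ i j => C (σ⁻¹ ℓ) (σ⁻¹ i) (σ⁻¹ j)

/-- optimal value O_k -/
noncomputable def Ovalue (k : ℕ) : ℝ := sInf {y | ∃ C, inSk k C ∧ gMax k C = y}

set_option maxHeartbeats 2000000 in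
theorem stmt18 (Δ : Fin 3 → Matrix (Fin 3) (Fin 3) ℝ)
    (hrow : ∀ ℓ i : Fin 3, ∑ j, Δ ℓ i j = 0)
    (hcol : ∀ ℓ j : Fin 3, ∑ i, Δ ℓ i j = 0)
    (hvanish : ∀ s : Finset (Fin 3 × Fin 3),
      ((IsSample s ∧ s.card = 2 ∧ beta s = 2) ∨
       (IsSample s ∧ s.card = 3 ∧ beta s = 3 ∧ gamma s = 0)) →
      ∑ ℓ : Fin 3, (if mult s ℓ ≠ 0 then (1:ℝ) else -1) * gPart s Δ ℓ = 0) :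
    Δ = 0 := by
  have h0 : Δ 0 0 0 + Δ 0 0 1 + Δ 0 0 2 = 0 := by simpa [Fin.sum_univ_three] using hrow 0 0
  have h1 : Δ 0 1 0 + Δ 0 1 1 + Δ 0 1 2 = 0 := by simpa [Fin.sum_univ_three] using hrow 0 1
  have h2 : Δ 0 2 0 + Δ 0 2 1 + Δ 0 2 2 = 0 := by simpa [Fin.sum_univ_three] using hrow 0 2
  have h3 : Δ 0 0 0 + Δ 0 1 0 + Δ 0 2 0 = 0 := by simpa [Fin.sum_univ_three] using hcol 0 0
  have h4 : Δ 0 0 1 + Δ 0 1 1 + Δ 0 2 1 = 0 := by simpa [Fin.sum_univ_three] using hcol 0 1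
  have h5 : Δ 0 0 2 + Δ 0 1 2 + Δ 0 2 2 = 0 := by simpa [Fin.sum_univ_three] using hcol 0 2
  have h6 : Δ 1 0 0 + Δ 1 0 1 + Δ 1 0 2 = 0 := by simpa [Fin.sum_univ_three] using hrow 1 0
  have h7 : Δ 1 1 0 + Δ 1 1 1 + Δ 1 1 2 = 0 := by simpa [Fin.sum_univ_three] using hrow 1 1
  have h8 : Δ 1 2 0 + Δ 1 2 1 + Δ 1 2 2 = 0 := by simpa [Fin.sum_univ_three] using hrow 1 2
  have h9 : Δ 1 0 0 + Δ 1 1 0 + Δ 1 2 0 = 0 := by simpa [Fin.sum_univ_three] using hcol 1 0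
  have h10 : Δ 1 0 1 + Δ 1 1 1 + Δ 1 2 1 = 0 := by simpa [Fin.sum_univ_three] using hcol 1 1
  have h11 : Δ 1 0 2 + Δ 1 1 2 + Δ 1 2 2 = 0 := by simpa [Fin.sum_univ_three] using hcol 1 2
  have h12 : Δ 2 0 0 + Δ 2 0 1 + Δ 2 0 2 = 0 := by simpa [Fin.sum_univ_three] using hrow 2 0
  have h13 : Δ 2 1 0 + Δ 2 1 1 + Δ 2 1 2 = 0 := by simpa [Fin.sum_univ_three] using hrow 2 1
  have h14 : Δ 2 2 0 + Δ 2 2 1 + Δ 2 2 2 = 0 := by simpa [Fin.sum_univ_three] using hrow 2 2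
  have h15 : Δ 2 0 0 + Δ 2 1 0 + Δ 2 2 0 = 0 := by simpa [Fin.sum_univ_three] using hcol 2 0
  have h16 : Δ 2 0 1 + Δ 2 1 1 + Δ 2 2 1 = 0 := by simpa [Fin.sum_univ_three] using hcol 2 1
  have h17 : Δ 2 0 2 + Δ 2 1 2 + Δ 2 2 2 = 0 := by simpa [Fin.sum_univ_three] using hcol 2 2
  have h18 : (Δ 0 0 0 + Δ 0 0 1) + (Δ 1 0 0 + Δ 1 0 1) - (Δ 2 0 0 + Δ 2 0 1) = 0 := by
    have := hvanish ({((0:Fin 3),(0:Fin 3)), ((0:Fin 3),(1:Fin 3))} : Finset (Fin 3 × Fin 3)) (Or.inl ⟨⟨⟨((0:Fin 3),(0:Fin 3)), by decide⟩, by decide⟩, by decide, by decide⟩)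
    simp (config := { decide := true }) [gPart, mult, Finset.filter_insert, Finset.filter_singleton, Fin.sum_univ_three, Finset.sum_insert, Finset.mem_insert, Finset.mem_singleton] at this
    linarith only [this]
  have h19 : (Δ 0 0 0 + Δ 0 0 2) - (Δ 1 0 0 + Δ 1 0 2) + (Δ 2 0 0 + Δ 2 0 2) = 0 := by
    have := hvanish ({((0:Fin 3),(0:Fin 3)), ((0:Fin 3),(2:Fin 3))} : Finset (Fin 3 × Fin 3)) (Or.inl ⟨⟨⟨((0:Fin 3),(0:Fin 3)), by decide⟩, by decide⟩, by decide, by decide⟩)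
    simp (config := { decide := true }) [gPart, mult, Finset.filter_insert, Finset.filter_singleton, Fin.sum_univ_three, Finset.sum_insert, Finset.mem_insert, Finset.mem_singleton] at this
    linarith only [this]
  have h20 : (Δ 0 0 0 + Δ 0 1 1) + (Δ 1 0 0 + Δ 1 1 1) - (Δ 2 0 0 + Δ 2 1 1) = 0 := by
    have := hvanish ({((0:Fin 3),(0:Fin 3)), ((1:Fin 3),(1:Fin 3))} : Finset (Fin 3 × Fin 3)) (Or.inl ⟨⟨⟨((0:Fin 3),(0:Fin 3)), by decide⟩, by decide⟩, by decide, by decide⟩)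
    simp (config := { decide := true }) [gPart, mult, Finset.filter_insert, Finset.filter_singleton, Fin.sum_univ_three, Finset.sum_insert, Finset.mem_insert, Finset.mem_singleton] at this
    linarith only [this]
  have h21 : (Δ 0 0 0 + Δ 0 2 2) - (Δ 1 0 0 + Δ 1 2 2) + (Δ 2 0 0 + Δ 2 2 2) = 0 := by
    have := hvanish ({((0:Fin 3),(0:Fin 3)), ((2:Fin 3),(2:Fin 3))} : Finset (Fin 3 × Fin 3)) (Or.inl ⟨⟨⟨((0:Fin 3),(0:Fin 3)), by decide⟩, by decide⟩, by decide, by decide⟩)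
    simp (config := { decide := true }) [gPart, mult, Finset.filter_insert, Finset.filter_singleton, Fin.sum_univ_three, Finset.sum_insert, Finset.mem_insert, Finset.mem_singleton] at this
    linarith only [this]
  have h22 : (Δ 0 0 1 + Δ 0 1 0) + (Δ 1 0 1 + Δ 1 1 0) - (Δ 2 0 1 + Δ 2 1 0) = 0 := by
    have := hvanish ({((0:Fin 3),(1:Fin 3)), ((1:Fin 3),(0:Fin 3))} : Finset (Fin 3 × Fin 3)) (Or.inl ⟨⟨⟨((0:Fin 3),(1:Fin 3)), by decide⟩, by decide⟩, by decide, by decide⟩)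
    simp (config := { decide := true }) [gPart, mult, Finset.filter_insert, Finset.filter_singleton, Fin.sum_univ_three, Finset.sum_insert, Finset.mem_insert, Finset.mem_singleton] at this
    linarith only [this]
  have h23 : (Δ 0 0 2 + Δ 0 2 0) - (Δ 1 0 2 + Δ 1 2 0) + (Δ 2 0 2 + Δ 2 2 0) = 0 := by
    have := hvanish ({((0:Fin 3),(2:Fin 3)), ((2:Fin 3),(0:Fin 3))} : Finset (Fin 3 × Fin 3)) (Or.inl ⟨⟨⟨((0:Fin 3),(2:Fin 3)), by decide⟩, by decide⟩, by decide, by decide⟩)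
    simp (config := { decide := true }) [gPart, mult, Finset.filter_insert, Finset.filter_singleton, Fin.sum_univ_three, Finset.sum_insert, Finset.mem_insert, Finset.mem_singleton] at this
    linarith only [this]
  have h24 : (Δ 0 1 0 + Δ 0 1 1) + (Δ 1 1 0 + Δ 1 1 1) - (Δ 2 1 0 + Δ 2 1 1) = 0 := by
    have := hvanish ({((1:Fin 3),(0:Fin 3)), ((1:Fin 3),(1:Fin 3))} : Finset (Fin 3 × Fin 3)) (Or.inl ⟨⟨⟨((1:Fin 3),(0:Fin 3)), by decide⟩, by decide⟩, by decide, by decide⟩)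
    simp (config := { decide := true }) [gPart, mult, Finset.filter_insert, Finset.filter_singleton, Fin.sum_univ_three, Finset.sum_insert, Finset.mem_insert, Finset.mem_singleton] at this
    linarith only [this]
  have h25 : - (Δ 0 1 1 + Δ 0 1 2) + (Δ 1 1 1 + Δ 1 1 2) + (Δ 2 1 1 + Δ 2 1 2) = 0 := by
    have := hvanish ({((1:Fin 3),(1:Fin 3)), ((1:Fin 3),(2:Fin 3))} : Finset (Fin 3 × Fin 3)) (Or.inl ⟨⟨⟨((1:Fin 3),(1:Fin 3)), by decide⟩, by decide⟩, by decide, by decide⟩)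
    simp (config := { decide := true }) [gPart, mult, Finset.filter_insert, Finset.filter_singleton, Fin.sum_univ_three, Finset.sum_insert, Finset.mem_insert, Finset.mem_singleton] at this
    linarith only [this]
  have h26 : - (Δ 0 1 1 + Δ 0 2 2) + (Δ 1 1 1 + Δ 1 2 2) + (Δ 2 1 1 + Δ 2 2 2) = 0 := by
    have := hvanish ({((1:Fin 3),(1:Fin 3)), ((2:Fin 3),(2:Fin 3))} : Finset (Fin 3 × Fin 3)) (Or.inl ⟨⟨⟨((1:Fin 3),(1:Fin 3)), by decide⟩, by decide⟩, by decide, by decide⟩)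
    simp (config := { decide := true }) [gPart, mult, Finset.filter_insert, Finset.filter_singleton, Fin.sum_univ_three, Finset.sum_insert, Finset.mem_insert, Finset.mem_singleton] at this
    linarith only [this]
  have h27 : - (Δ 0 1 2 + Δ 0 2 1) + (Δ 1 1 2 + Δ 1 2 1) + (Δ 2 1 2 + Δ 2 2 1) = 0 := by
    have := hvanish ({((1:Fin 3),(2:Fin 3)), ((2:Fin 3),(1:Fin 3))} : Finset (Fin 3 × Fin 3)) (Or.inl ⟨⟨⟨((1:Fin 3),(2:Fin 3)), by decide⟩, by decide⟩, by decide, by decide⟩)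
    simp (config := { decide := true }) [gPart, mult, Finset.filter_insert, Finset.filter_singleton, Fin.sum_univ_three, Finset.sum_insert, Finset.mem_insert, Finset.mem_singleton] at this
    linarith only [this]
  have h28 : (Δ 0 2 0 + Δ 0 2 2) - (Δ 1 2 0 + Δ 1 2 2) + (Δ 2 2 0 + Δ 2 2 2) = 0 := by
    have := hvanish ({((2:Fin 3),(0:Fin 3)), ((2:Fin 3),(2:Fin 3))} : Finset (Fin 3 × Fin 3)) (Or.inl ⟨⟨⟨((2:Fin 3),(0:Fin 3)), by decide⟩, by decide⟩, by decide, by decide⟩)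
    simp (config := { decide := true }) [gPart, mult, Finset.filter_insert, Finset.filter_singleton, Fin.sum_univ_three, Finset.sum_insert, Finset.mem_insert, Finset.mem_singleton] at this
    linarith only [this]
  have h29 : - (Δ 0 2 1 + Δ 0 2 2) + (Δ 1 2 1 + Δ 1 2 2) + (Δ 2 2 1 + Δ 2 2 2) = 0 := by
    have := hvanish ({((2:Fin 3),(1:Fin 3)), ((2:Fin 3),(2:Fin 3))} : Finset (Fin 3 × Fin 3)) (Or.inl ⟨⟨⟨((2:Fin 3),(1:Fin 3)), by decide⟩, by decide⟩, by decide, by decide⟩)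
    simp (config := { decide := true }) [gPart, mult, Finset.filter_insert, Finset.filter_singleton, Fin.sum_univ_three, Finset.sum_insert, Finset.mem_insert, Finset.mem_singleton] at this
    linarith only [this]
  have h30 : (Δ 0 0 1 + Δ 0 0 2 + Δ 0 1 0) + (Δ 1 0 1 + Δ 1 0 2 + Δ 1 1 0) + (Δ 2 0 1 + Δ 2 0 2 + Δ 2 1 0) = 0 := by
    have := hvanish ({((0:Fin 3),(1:Fin 3)), ((0:Fin 3),(2:Fin 3)), ((1:Fin 3),(0:Fin 3))} : Finset (Fin 3 × Fin 3)) (Or.inr ⟨⟨⟨((0:Fin 3),(1:Fin 3)), by decide⟩, by decide⟩, by decide, by decide, by decide⟩)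
    simp (config := { decide := true }) [gPart, mult, Finset.filter_insert, Finset.filter_singleton, Fin.sum_univ_three, Finset.sum_insert, Finset.mem_insert, Finset.mem_singleton] at this
    linarith only [this]
  have h31 : (Δ 0 0 1 + Δ 0 0 2 + Δ 0 2 0) + (Δ 1 0 1 + Δ 1 0 2 + Δ 1 2 0) + (Δ 2 0 1 + Δ 2 0 2 + Δ 2 2 0) = 0 := by
    have := hvanish ({((0:Fin 3),(1:Fin 3)), ((0:Fin 3),(2:Fin 3)), ((2:Fin 3),(0:Fin 3))} : Finset (Fin 3 × Fin 3)) (Or.inr ⟨⟨⟨((0:Fin 3),(1:Fin 3)), by decide⟩, by decide⟩, by decide, by decide, by decide⟩)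
    simp (config := { decide := true }) [gPart, mult, Finset.filter_insert, Finset.filter_singleton, Fin.sum_univ_three, Finset.sum_insert, Finset.mem_insert, Finset.mem_singleton] at this
    linarith only [this]
  have h32 : (Δ 0 0 1 + Δ 0 1 0 + Δ 0 1 2) + (Δ 1 0 1 + Δ 1 1 0 + Δ 1 1 2) + (Δ 2 0 1 + Δ 2 1 0 + Δ 2 1 2) = 0 := by
    have := hvanish ({((0:Fin 3),(1:Fin 3)), ((1:Fin 3),(0:Fin 3)), ((1:Fin 3),(2:Fin 3))} : Finset (Fin 3 × Fin 3)) (Or.inr ⟨⟨⟨((0:Fin 3),(1:Fin 3)), by decide⟩, by decide⟩, by decide, by decide, by decide⟩)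
    simp (config := { decide := true }) [gPart, mult, Finset.filter_insert, Finset.filter_singleton, Fin.sum_univ_three, Finset.sum_insert, Finset.mem_insert, Finset.mem_singleton] at this
    linarith only [this]
  have h33 : (Δ 0 0 1 + Δ 0 1 2 + Δ 0 2 0) + (Δ 1 0 1 + Δ 1 1 2 + Δ 1 2 0) + (Δ 2 0 1 + Δ 2 1 2 + Δ 2 2 0) = 0 := by
    have := hvanish ({((0:Fin 3),(1:Fin 3)), ((1:Fin 3),(2:Fin 3)), ((2:Fin 3),(0:Fin 3))} : Finset (Fin 3 × Fin 3)) (Or.inr ⟨⟨⟨((0:Fin 3),(1:Fin 3)), by decide⟩, by decide⟩, by decide, by decide, by decide⟩)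
    simp (config := { decide := true }) [gPart, mult, Finset.filter_insert, Finset.filter_singleton, Fin.sum_univ_three, Finset.sum_insert, Finset.mem_insert, Finset.mem_singleton] at this
    linarith only [this]
  have h34 : (Δ 0 0 2 + Δ 0 1 0 + Δ 0 2 1) + (Δ 1 0 2 + Δ 1 1 0 + Δ 1 2 1) + (Δ 2 0 2 + Δ 2 1 0 + Δ 2 2 1) = 0 := by
    have := hvanish ({((0:Fin 3),(2:Fin 3)), ((1:Fin 3),(0:Fin 3)), ((2:Fin 3),(1:Fin 3))} : Finset (Fin 3 × Fin 3)) (Or.inr ⟨⟨⟨((0:Fin 3),(2:Fin 3)), by decide⟩, by decide⟩, by decide, by decide, by decide⟩)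
    simp (config := { decide := true }) [gPart, mult, Finset.filter_insert, Finset.filter_singleton, Fin.sum_univ_three, Finset.sum_insert, Finset.mem_insert, Finset.mem_singleton] at this
    linarith only [this]
  have h35 : (Δ 0 0 2 + Δ 0 2 0 + Δ 0 2 1) + (Δ 1 0 2 + Δ 1 2 0 + Δ 1 2 1) + (Δ 2 0 2 + Δ 2 2 0 + Δ 2 2 1) = 0 := by
    have := hvanish ({((0:Fin 3),(2:Fin 3)), ((2:Fin 3),(0:Fin 3)), ((2:Fin 3),(1:Fin 3))} : Finset (Fin 3 × Fin 3)) (Or.inr ⟨⟨⟨((0:Fin 3),(2:Fin 3)), by decide⟩, by decide⟩, by decide, by decide, by decide⟩)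
    simp (config := { decide := true }) [gPart, mult, Finset.filter_insert, Finset.filter_singleton, Fin.sum_univ_three, Finset.sum_insert, Finset.mem_insert, Finset.mem_singleton] at this
    linarith only [this]
  have h36 : (Δ 0 1 0 + Δ 0 1 2 + Δ 0 2 1) + (Δ 1 1 0 + Δ 1 1 2 + Δ 1 2 1) + (Δ 2 1 0 + Δ 2 1 2 + Δ 2 2 1) = 0 := by
    have := hvanish ({((1:Fin 3),(0:Fin 3)), ((1:Fin 3),(2:Fin 3)), ((2:Fin 3),(1:Fin 3))} : Finset (Fin 3 × Fin 3)) (Or.inr ⟨⟨⟨((1:Fin 3),(0:Fin 3)), by decide⟩, by decide⟩, by decide, by decide, by decide⟩)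
    simp (config := { decide := true }) [gPart, mult, Finset.filter_insert, Finset.filter_singleton, Fin.sum_univ_three, Finset.sum_insert, Finset.mem_insert, Finset.mem_singleton] at this
    linarith only [this]
  have h37 : (Δ 0 1 2 + Δ 0 2 0 + Δ 0 2 1) + (Δ 1 1 2 + Δ 1 2 0 + Δ 1 2 1) + (Δ 2 1 2 + Δ 2 2 0 + Δ 2 2 1) = 0 := by
    have := hvanish ({((1:Fin 3),(2:Fin 3)), ((2:Fin 3),(0:Fin 3)), ((2:Fin 3),(1:Fin 3))} : Finset (Fin 3 × Fin 3)) (Or.inr ⟨⟨⟨((1:Fin 3),(2:Fin 3)), by decide⟩, by decide⟩, by decide, by decide, by decide⟩)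
    simp (config := { decide := true }) [gPart, mult, Finset.filter_insert, Finset.filter_singleton, Fin.sum_univ_three, Finset.sum_insert, Finset.mem_insert, Finset.mem_singleton] at this
    linarith only [this]
  have e000 : Δ 0 0 0 = 0 := by linear_combination (5/6) * h0 + (1/6) * h3 + (-1/2) * h4 + (-1/2) * h5 + (-1/6) * h6 + (1/6) * h9 + (1/2) * h10 + (1/2) * h11 + (1/3) * h12 + (1/2) * h13 + (1/2) * h14 + (-1/3) * h15 + (-1/2) * h26 + (-1/2) * h27 + (-1/6) * h30 + (-1/6) * h31
  have e001 : Δ 0 0 1 = 0 := by linear_combination (-1/6) * h1 + (1/3) * h4 + (1/3) * h5 + (-1/3) * h6 + (1/6) * h7 + (-1/3) * h9 + (-1/3) * h10 + (-1/3) * h11 + (1/3) * h12 + (-1/6) * h13 + (-1/3) * h14 + (1/3) * h15 + (1/3) * h18 + (-1/3) * h19 + (1/6) * h22 + (-1/6) * h23 + (-1/6) * h25 + (1/3) * h26 + (1/3) * h27 + (1/6) * h31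
  have e002 : Δ 0 0 2 = 0 := by linear_combination (1/6) * h0 + (1/6) * h1 + (-1/6) * h3 + (1/6) * h4 + (1/6) * h5 + (1/2) * h6 + (-1/6) * h7 + (1/6) * h9 + (-1/6) * h10 + (-1/6) * h11 + (-2/3) * h12 + (-1/3) * h13 + (-1/6) * h14 + (-1/3) * h18 + (1/3) * h19 + (-1/6) * h22 + (1/6) * h23 + (1/6) * h25 + (1/6) * h26 + (1/6) * h27 + (1/6) * h30
  have e010 : Δ 0 1 0 = 0 := by linear_combination (-1/6) * h0 + (1/2) * h1 + (1/6) * h3 + (-1/6) * h6 + (-1/2) * h7 + (1/6) * h9 + (-1/6) * h12 + (-1/2) * h13 + (1/6) * h15 + (1/2) * h25 + (1/3) * h30 + (-1/6) * h31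
  have e011 : Δ 0 1 1 = 0 := by linear_combination (-1/2) * h0 + (1/3) * h1 + (-1/2) * h3 + (1/3) * h4 + (-1/6) * h5 + (1/6) * h6 + (-1/3) * h7 + (1/6) * h9 + (-1/3) * h10 + (1/6) * h11 + (-1/6) * h12 + (1/3) * h13 + (-1/3) * h14 + (-1/6) * h15 + (-1/2) * h17 + (-1/6) * h18 + (1/6) * h19 + (1/2) * h20 + (1/2) * h21 + (1/6) * h22 + (1/3) * h23 + (-1/6) * h25 + (1/3) * h26 + (1/3) * h27 + (1/6) * h31
  have e012 : Δ 0 1 2 = 0 := by linear_combination (2/3) * h0 + (1/6) * h1 + (1/3) * h3 + (-1/3) * h4 + (1/6) * h5 + (5/6) * h7 + (-1/3) * h9 + (1/3) * h10 + (-1/6) * h11 + (1/3) * h12 + (1/6) * h13 + (1/3) * h14 + (1/2) * h17 + (1/6) * h18 + (-1/6) * h19 + (-1/2) * h20 + (-1/2) * h21 + (-1/6) * h22 + (-1/3) * h23 + (-1/3) * h25 + (-1/3) * h26 + (-1/3) * h27 + (-1/3) * h30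
  have e020 : Δ 0 2 0 = 0 := by linear_combination (-2/3) * h0 + (-1/2) * h1 + (2/3) * h3 + (1/2) * h4 + (1/2) * h5 + (1/3) * h6 + (1/2) * h7 + (-1/3) * h9 + (-1/2) * h10 + (-1/2) * h11 + (-1/6) * h12 + (-1/2) * h14 + (1/6) * h15 + (-1/2) * h25 + (1/2) * h26 + (1/2) * h27 + (-1/6) * h30 + (1/3) * h31
  have e021 : Δ 0 2 1 = 0 := by linear_combination (1/2) * h0 + (-1/6) * h1 + (1/2) * h3 + (1/3) * h4 + (-1/6) * h5 + (1/6) * h6 + (1/6) * h7 + (1/6) * h9 + (2/3) * h10 + (1/6) * h11 + (-1/6) * h12 + (-1/6) * h13 + (2/3) * h14 + (-1/6) * h15 + (1/2) * h17 + (-1/6) * h18 + (1/6) * h19 + (-1/2) * h20 + (-1/2) * h21 + (-1/3) * h22 + (-1/6) * h23 + (1/3) * h25 + (-2/3) * h26 + (-2/3) * h27 + (-1/3) * h31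
  have e022 : Δ 0 2 2 = 0 := by linear_combination (-5/6) * h0 + (-1/3) * h1 + (-1/6) * h3 + (1/6) * h4 + (2/3) * h5 + (-1/2) * h6 + (-2/3) * h7 + (1/6) * h9 + (-1/6) * h10 + (1/3) * h11 + (1/3) * h12 + (1/6) * h13 + (-1/6) * h14 + (-1/2) * h17 + (1/6) * h18 + (-1/6) * h19 + (1/2) * h20 + (1/2) * h21 + (1/3) * h22 + (1/6) * h23 + (1/6) * h25 + (1/6) * h26 + (1/6) * h27 + (1/6) * h30
  have e100 : Δ 1 0 0 = 0 := by linear_combination (1/6) * h1 + (1/6) * h4 + (1/6) * h5 + (1/3) * h6 + (-1/6) * h7 + (1/3) * h9 + (-1/6) * h10 + (-1/6) * h11 + (1/6) * h12 + (-1/3) * h13 + (-1/6) * h14 + (1/6) * h15 + (1/6) * h18 + (-1/6) * h19 + (-1/6) * h22 + (1/6) * h23 + (1/6) * h25 + (1/6) * h26 + (1/6) * h27 + (-1/6) * h31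
  have e101 : Δ 1 0 1 = 0 := by linear_combination (-5/6) * h0 + (-1/6) * h1 + (-1/3) * h3 + (1/6) * h4 + (1/2) * h6 + (-1/2) * h7 + (-1/6) * h10 + (-1/3) * h12 + (-1/6) * h14 + (-1/6) * h15 + (-1/2) * h17 + (1/2) * h19 + (1/3) * h20 + (1/3) * h21 + (1/6) * h22 + (1/6) * h23 + (1/3) * h26 + (1/6) * h27 + (1/6) * h31 + (1/3) * h32
  have e102 : Δ 1 0 2 = 0 := by linear_combination (5/6) * h0 + (1/3) * h3 + (-1/3) * h4 + (-1/6) * h5 + (1/6) * h6 + (2/3) * h7 + (-1/3) * h9 + (1/3) * h10 + (1/6) * h11 + (1/6) * h12 + (1/3) * h13 + (1/3) * h14 + (1/2) * h17 + (-1/6) * h18 + (-1/3) * h19 + (-1/3) * h20 + (-1/3) * h21 + (-1/3) * h23 + (-1/6) * h25 + (-1/2) * h26 + (-1/3) * h27 + (-1/3) * h32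
  have e110 : Δ 1 1 0 = 0 := by linear_combination (1/2) * h0 + (-1/3) * h1 + (-1/3) * h4 + (-1/3) * h5 + (-1/6) * h6 + (1/3) * h7 + (1/3) * h9 + (1/3) * h10 + (1/3) * h11 + (1/6) * h12 + (2/3) * h13 + (1/3) * h14 + (-1/3) * h15 + (-1/3) * h18 + (-1/6) * h19 + (1/3) * h22 + (1/6) * h23 + (-1/3) * h25 + (-1/3) * h26 + (-1/3) * h27 + (-1/6) * h31
  have e111 : Δ 1 1 1 = 0 := by linear_combination (-1/3) * h0 + (-1/6) * h1 + (1/6) * h3 + (1/6) * h4 + (1/2) * h5 + (1/2) * h7 + (-1/2) * h9 + (-1/6) * h10 + (-1/2) * h11 + (1/6) * h12 + (-1/6) * h14 + (1/3) * h15 + (1/3) * h20 + (-1/6) * h21 + (1/6) * h22 + (-1/3) * h23 + (1/3) * h26 + (1/6) * h27 + (1/6) * h31 + (-1/6) * h32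
  have e112 : Δ 1 1 2 = 0 := by linear_combination (-1/6) * h0 + (1/2) * h1 + (-1/6) * h3 + (1/6) * h4 + (-1/6) * h5 + (1/6) * h6 + (1/6) * h7 + (1/6) * h9 + (-1/6) * h10 + (1/6) * h11 + (-1/3) * h12 + (-2/3) * h13 + (-1/6) * h14 + (1/3) * h18 + (1/6) * h19 + (-1/3) * h20 + (1/6) * h21 + (-1/2) * h22 + (1/6) * h23 + (1/3) * h25 + (1/6) * h27 + (1/6) * h32
  have e120 : Δ 1 2 0 = 0 := by linear_combination (-1/2) * h0 + (1/6) * h1 + (1/6) * h4 + (1/6) * h5 + (-1/6) * h6 + (-1/6) * h7 + (1/3) * h9 + (-1/6) * h10 + (-1/6) * h11 + (-1/3) * h12 + (-1/3) * h13 + (-1/6) * h14 + (1/6) * h15 + (1/6) * h18 + (1/3) * h19 + (-1/6) * h22 + (-1/3) * h23 + (1/6) * h25 + (1/6) * h26 + (1/6) * h27 + (1/3) * h31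
  have e121 : Δ 1 2 1 = 0 := by linear_combination (7/6) * h0 + (1/3) * h1 + (1/6) * h3 + (-1/3) * h4 + (-1/2) * h5 + (-1/2) * h6 + (1/2) * h9 + (4/3) * h10 + (1/2) * h11 + (1/6) * h12 + (1/3) * h14 + (-1/6) * h15 + (1/2) * h17 + (-1/2) * h19 + (-2/3) * h20 + (-1/6) * h21 + (-1/3) * h22 + (1/6) * h23 + (-2/3) * h26 + (-1/3) * h27 + (-1/3) * h31 + (-1/6) * h32
  have e122 : Δ 1 2 2 = 0 := by linear_combination (-2/3) * h0 + (-1/2) * h1 + (-1/6) * h3 + (1/6) * h4 + (1/3) * h5 + (-1/3) * h6 + (-5/6) * h7 + (1/6) * h9 + (-1/6) * h10 + (2/3) * h11 + (1/6) * h12 + (1/3) * h13 + (-1/6) * h14 + (-1/2) * h17 + (-1/6) * h18 + (1/6) * h19 + (2/3) * h20 + (1/6) * h21 + (1/2) * h22 + (1/6) * h23 + (-1/6) * h25 + (1/2) * h26 + (1/6) * h27 + (1/6) * h32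
  have e200 : Δ 2 0 0 = 0 := by linear_combination (-1/6) * h0 + (-1/6) * h1 + (1/6) * h3 + (1/3) * h4 + (1/3) * h5 + (1/2) * h6 + (1/6) * h7 + (-1/6) * h9 + (-1/3) * h10 + (-1/3) * h11 + (1/6) * h12 + (-1/6) * h13 + (-1/3) * h14 + (1/2) * h15 + (-1/6) * h18 + (1/6) * h19 + (1/6) * h22 + (-1/6) * h23 + (-1/6) * h25 + (1/3) * h26 + (1/3) * h27 + (-1/6) * h30
  have e201 : Δ 2 0 1 = 0 := by linear_combination (1/6) * h0 + (-1/3) * h3 + (-1/6) * h4 + (-1/3) * h5 + (-1/6) * h6 + (-2/3) * h7 + (1/3) * h9 + (1/6) * h10 + (1/3) * h11 + (1/3) * h12 + (1/6) * h13 + (1/6) * h14 + (-1/2) * h15 + (-1/2) * h17 + (-1/3) * h18 + (-1/6) * h19 + (1/3) * h20 + (1/3) * h21 + (1/3) * h23 + (1/6) * h25 + (-1/6) * h27 + (1/3) * h32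
  have e202 : Δ 2 0 2 = 0 := by linear_combination (1/6) * h1 + (1/6) * h3 + (-1/6) * h4 + (-1/3) * h6 + (1/2) * h7 + (-1/6) * h9 + (1/6) * h10 + (1/2) * h12 + (1/6) * h14 + (1/2) * h17 + (1/2) * h18 + (-1/3) * h20 + (-1/3) * h21 + (-1/6) * h22 + (-1/6) * h23 + (-1/3) * h26 + (-1/6) * h27 + (1/6) * h30 + (-1/3) * h32
  have e210 : Δ 2 1 0 = 0 := by linear_combination (-2/3) * h0 + (-1/6) * h1 + (1/6) * h3 + (1/3) * h4 + (1/3) * h5 + (1/6) * h7 + (-1/6) * h9 + (-1/3) * h10 + (-1/3) * h11 + (-1/3) * h12 + (-1/6) * h13 + (-1/3) * h14 + (1/2) * h15 + (1/3) * h18 + (1/6) * h19 + (-1/3) * h22 + (-1/6) * h23 + (-1/6) * h25 + (1/3) * h26 + (1/3) * h27 + (1/3) * h30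
  have e211 : Δ 2 1 1 = 0 := by linear_combination (1/6) * h0 + (1/2) * h1 + (-1/3) * h3 + (-1/6) * h4 + (-1/3) * h5 + (-1/6) * h6 + (-1/6) * h7 + (1/3) * h9 + (1/6) * h10 + (1/3) * h11 + (1/3) * h12 + (2/3) * h13 + (1/6) * h14 + (-1/2) * h15 + (-1/2) * h17 + (1/6) * h18 + (-1/6) * h19 + (-1/6) * h20 + (1/3) * h21 + (1/3) * h23 + (1/6) * h25 + (-1/6) * h27 + (-1/6) * h32
  have e212 : Δ 2 1 2 = 0 := by linear_combination (1/2) * h0 + (-1/3) * h1 + (1/6) * h3 + (-1/6) * h4 + (1/6) * h6 + (-1/6) * h9 + (1/6) * h10 + (1/2) * h13 + (1/6) * h14 + (1/2) * h17 + (-1/2) * h18 + (1/6) * h20 + (-1/3) * h21 + (1/3) * h22 + (-1/6) * h23 + (-1/3) * h26 + (-1/6) * h27 + (-1/3) * h30 + (1/6) * h32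
  have e220 : Δ 2 2 0 = 0 := by linear_combination (5/6) * h0 + (1/3) * h1 + (-1/3) * h3 + (-2/3) * h4 + (-2/3) * h5 + (-1/2) * h6 + (-1/3) * h7 + (1/3) * h9 + (2/3) * h10 + (2/3) * h11 + (1/6) * h12 + (1/3) * h13 + (2/3) * h14 + (-1/6) * h18 + (-1/3) * h19 + (1/6) * h22 + (1/3) * h23 + (1/3) * h25 + (-2/3) * h26 + (-2/3) * h27 + (-1/6) * h30
  have e221 : Δ 2 2 1 = 0 := by linear_combination (-1/3) * h0 + (-1/2) * h1 + (2/3) * h3 + (1/3) * h4 + (2/3) * h5 + (1/3) * h6 + (5/6) * h7 + (-2/3) * h9 + (-1/3) * h10 + (-2/3) * h11 + (1/3) * h12 + (1/6) * h13 + (2/3) * h14 + (1/6) * h18 + (1/3) * h19 + (-1/6) * h20 + (-2/3) * h21 + (-2/3) * h23 + (-1/3) * h25 + (1/3) * h27 + (-1/6) * h32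
  have e222 : Δ 2 2 2 = 0 := by linear_combination (-1/2) * h0 + (1/6) * h1 + (-1/3) * h3 + (1/3) * h4 + (1/6) * h6 + (-1/2) * h7 + (1/3) * h9 + (-1/3) * h10 + (-1/2) * h12 + (-1/2) * h13 + (-1/3) * h14 + (1/6) * h20 + (2/3) * h21 + (-1/6) * h22 + (1/3) * h23 + (2/3) * h26 + (1/3) * h27 + (1/6) * h30 + (1/6) * h32
  funext l
  ext i j
  fin_cases l <;> fin_cases i <;> fin_cases j <;> simp only [Matrix.zero_apply] <;> assumption
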